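/- Every finite simple graph G with n vertices admits a faithful and linearly independent orthogonal co-representation in ℝⁿ; that is, there exists an injective map v : V(G) → ℝⁿ such that ‖v_i‖ = 1 for every vertex i, the family (v_i)_{i ∈ V(G)} is linearly independent, and for all distinct vertices i, j: i and j are adjacent in G if and only if ⟨v_i, v_j⟩ = 0. -/

import Mathlib

open RealInnerProductSpace
open Matrix
open scoped MatrixOrder

set_option maxHeartbeats 1000000 in
/-- **Every finite simple graph `G` with `n` vertices admits a faithful and linearly
independent orthogonal co-representation in `ℝⁿ`**: there is an injective assignment of
unit vectors to the vertices, forming a linearly independent family, such that two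
distinct vertices are adjacent iff the corresponding vectors are orthogonal. -/
theorem faithful_linearIndependent_orthogonal_corepresentation
    (V : Type*) [Fintype V] (G : SimpleGraph V) :
    ∃ v : V → EuclideanSpace ℝ (Fin (Fintype.card V)),
      Function.Injective v ∧
      (∀ i, ‖v i‖ = 1) ∧
      LinearIndependent ℝ v ∧
      ∀ i j : V, i ≠ j → (G.Adj i j ↔ ⟪v i, v j⟫ = 0) := by
  classical
  set n := Fintype.card V with hn
  let e : V ≃ Fin n := Fintype.equivFin V
  set c : ℝ := 1 / (n + 1) with hc
  have hc0 : 0 < c := by positivity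
  have hcn : c * (n + 1) = 1 := by rw [hc]; field_simp
  let M : Matrix (Fin n) (Fin n) ℝ :=
    Matrix.of fun i j => if i = j then 1 else if G.Adj (e.symm i) (e.symm j) then 0 else c
  have hMsymm : M.IsHermitian := by
    ext i j
    simp only [M, Matrix.conjTranspose_apply, Matrix.of_apply, star_trivial]
    by_cases h : i = j
    · simp [h]
    · have h' : ¬ j = i := fun hh => h hh.symm
      simp only [if_neg h, if_neg h']
      by_cases ha : G.Adj (e.symm i) (e.symm j)
      · simp [ha, ha.symm]
      · have : ¬ G.Adj (e.symm j) (e.symm i) := fun hh => ha hh.symm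
        simp [ha, this]
  have hMpd : M.PosDef := by
    refine Matrix.PosDef.of_dotProduct_mulVec_pos hMsymm fun x hx => ?_
    have hQ : dotProduct (star x) (M.mulVec x) = ∑ i, ∑ j, x i * (M i j * x j) := by
      simp [dotProduct, Matrix.mulVec, Finset.mul_sum]
    have hdiag : (∑ i, x i ^ 2) = ∑ i, ∑ j, (if i = j then x i * x j else 0) := by
      simp [sq]
    have key : |∑ i, ∑ j, x i * (M i j * x j) - ∑ i, x i ^ 2|
        ≤ c * ((∑ i, |x i|) * (∑ j, |x j|)) := by
      rw [hdiag, ← Finset.sum_sub_distrib]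
      simp_rw [← Finset.sum_sub_distrib]
      calc |∑ i, ∑ j, (x i * (M i j * x j) - if i = j then x i * x j else 0)|
          ≤ ∑ i, ∑ j, |x i * (M i j * x j) - if i = j then x i * x j else 0| := by
            refine (Finset.abs_sum_le_sum_abs _ _).trans ?_
            exact Finset.sum_le_sum fun i _ => Finset.abs_sum_le_sum_abs _ _
        _ ≤ ∑ i, ∑ j, c * (|x i| * |x j|) := by
            refine Finset.sum_le_sum fun i _ => Finset.sum_le_sum fun j _ => ?_
            by_cases h : i = j
            · subst h
              simp only [M, Matrix.of_apply, eq_self_iff_true, if_true, one_mul, sub_self,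
                abs_zero]
              exact mul_nonneg hc0.le (mul_nonneg (abs_nonneg _) (abs_nonneg _))
            · simp only [M, Matrix.of_apply, if_neg h, sub_zero]
              by_cases ha : G.Adj (e.symm i) (e.symm j)
              · simp only [if_pos ha, zero_mul, mul_zero, abs_zero]
                exact mul_nonneg hc0.le (mul_nonneg (abs_nonneg _) (abs_nonneg _))
              · refine le_of_eq ?_
                simp only [if_neg ha, abs_mul, abs_of_pos hc0]
                ring
        _ = c * ((∑ i, |x i|) * (∑ j, |x j|)) := by
            rw [Finset.sum_mul_sum, Finset.mul_sum]
            simp_rw [Finset.mul_sum]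
    have hP : (∑ i, |x i|) * (∑ j, |x j|) ≤ n * ∑ i, x i ^ 2 := by
      have := sq_sum_le_card_mul_sum_sq (s := (Finset.univ : Finset (Fin n)))
        (f := fun i => |x i|)
      simpa [sq, sq_abs, Finset.card_univ] using this
    have hS : 0 < ∑ i, x i ^ 2 := by
      obtain ⟨i, hi⟩ := Function.ne_iff.mp hx
      exact Finset.sum_pos' (fun j _ => sq_nonneg _)
        ⟨i, Finset.mem_univ i, by simpa [sq_abs] using pow_pos (abs_pos.mpr hi) 2⟩
    rw [hQ]
    have h1 := (abs_le.mp key).1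
    nlinarith [mul_le_mul_of_nonneg_left hP hc0.le, mul_pos hc0 hS]
  -- square root
  set B := CFC.sqrt M with hB
  have hBB : B * B = M := CFC.sqrt_mul_sqrt_self M hMpd.posSemidef.nonneg
  have hBH : Bᵀ = B := by
    have := (CFC.sqrt_nonneg M).posSemidef.isHermitian
    rw [hB, ← Matrix.conjTranspose_eq_transpose_of_trivial]; exact this
  have hBunit : IsUnit B := by
    rw [Matrix.isUnit_iff_isUnit_det, isUnit_iff_ne_zero]
    intro hdet
    have : M.det = 0 := by rw [← hBB, Matrix.det_mul, hdet, mul_zero]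
    exact hMpd.det_pos.ne' this
  let v : V → EuclideanSpace ℝ (Fin n) := fun i => (WithLp.equiv 2 _).symm (Bᵀ (e i))
  have hinner : ∀ i j, ⟪v i, v j⟫ = M (e i) (e j) := by
    intro i j
    have : ⟪v i, v j⟫ = ∑ k, B k (e i) * B k (e j) := by
      simp [v, PiLp.inner_apply, RCLike.inner_apply, Matrix.transpose_apply]
      exact Finset.sum_congr rfl fun _ _ => mul_comm _ _
    calc ⟪v i, v j⟫ = ∑ k, B k (e i) * B k (e j) := this
      _ = (Bᵀ * B) (e i) (e j) := by
          rw [Matrix.mul_apply]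
          exact Finset.sum_congr rfl fun k _ => by simp [Matrix.transpose_apply]
      _ = M (e i) (e j) := by rw [hBH, hBB]
  have hLI : LinearIndependent ℝ v := by
    have h1 : LinearIndependent ℝ (fun i : Fin n => Bᵀ i) :=
      Matrix.linearIndependent_cols_iff_isUnit.mpr hBunit
    have h2 : LinearIndependent ℝ
        (⇑(WithLp.linearEquiv 2 ℝ (∀ _ : Fin n, ℝ)).toLinearMap ∘ v) :=
      h1.comp e e.injective
    exact LinearIndependent.of_comp _ h2
  refine ⟨v, hLI.injective, ?_, hLI, ?_⟩
  · intro i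
    have h1 : ⟪v i, v i⟫ = 1 := by
      rw [hinner]; simp [M]
    have h2 : ‖v i‖ ^ 2 = 1 := by rw [← real_inner_self_eq_norm_sq]; exact h1
    nlinarith [norm_nonneg (v i)]
  · intro i j hij
    have hne : e i ≠ e j := fun h => hij (e.injective h)
    rw [hinner]
    simp only [M, Matrix.of_apply, if_neg hne, e.symm_apply_apply]
    by_cases hadj : G.Adj i j
    · simp [hadj]
    · simp [hadj, hc0.ne']
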